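/- The enhanced power graph of the direct product C₃₀ × C₃₀ of two cyclic groups of order 30 contains an induced 5-cycle, and hence is not a perfect graph. -/

import Mathlib

def powerGraph (G : Type*) [Group G] : SimpleGraph G where
  Adj x y := x ≠ y ∧ ((∃ n : ℤ, n ≠ 0 ∧ y = x ^ n) ∨ ∃ n : ℤ, n ≠ 0 ∧ x = y ^ n)
  symm := ⟨fun _ _ ⟨h, h2⟩ => ⟨h.symm, h2.symm⟩⟩
  loopless := ⟨fun _ ⟨h, _⟩ => h rfl⟩

def enhancedPowerGraph (G : Type*) [Group G] : SimpleGraph G where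
  Adj x y := x ≠ y ∧ ∃ z : G, x ∈ Subgroup.zpowers z ∧ y ∈ Subgroup.zpowers z
  symm := ⟨fun _ _ ⟨h, z, hx, hy⟩ => ⟨h.symm, z, hy, hx⟩⟩
  loopless := ⟨fun _ ⟨h, _⟩ => h rfl⟩


def SimpleGraph.IsPerfect {V : Type*} (G : SimpleGraph V) : Prop :=
  ∀ s : Set V, (G.induce s).chromaticNumber = ((G.induce s).cliqueNum : ℕ∞)

open Multiplicative

/-- Abbreviation for the underlying additive group. -/
abbrev Z30 := ZMod 30 × ZMod 30

lemma mem_zpowers_iff' (x z : Multiplicative Z30) :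
    x ∈ Subgroup.zpowers z ↔ ∃ c : ZMod 30, c • z.toAdd = x.toAdd := by
  rw [Subgroup.mem_zpowers_iff]
  constructor
  · rintro ⟨n, rfl⟩
    exact ⟨(n : ZMod 30), by rw [Int.cast_smul_eq_zsmul, toAdd_zpow]⟩
  · rintro ⟨c, hc⟩
    refine ⟨(c.val : ℤ), ?_⟩
    apply Multiplicative.toAdd.injective
    rw [toAdd_zpow, ← Int.cast_smul_eq_zsmul (ZMod 30), show ((c.val : ℤ) : ZMod 30) = c by simp,
      hc]

lemma adj_iff (x y : Multiplicative Z30) :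
    (enhancedPowerGraph (Multiplicative Z30)).Adj x y ↔
      x ≠ y ∧ ∃ z : Z30, (∃ c : ZMod 30, c • z = x.toAdd) ∧ ∃ d : ZMod 30, d • z = y.toAdd := by
  constructor
  · rintro ⟨hne, w, hx, hy⟩
    exact ⟨hne, w.toAdd, (mem_zpowers_iff' x w).mp hx, (mem_zpowers_iff' y w).mp hy⟩
  · rintro ⟨hne, z, hx, hy⟩
    exact ⟨hne, ofAdd z, (mem_zpowers_iff' x (ofAdd z)).mpr hx,
      (mem_zpowers_iff' y (ofAdd z)).mpr hy⟩

lemma not_adj (p : ℕ) [Fact (Nat.Prime p)] (hdvd : p ∣ 30) (x y : Z30)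
    (hx : ¬(ZMod.castHom hdvd (ZMod p) x.1 = 0 ∧ ZMod.castHom hdvd (ZMod p) x.2 = 0))
    (h : ∀ t : ZMod p, ¬(ZMod.castHom hdvd (ZMod p) y.1 = t * ZMod.castHom hdvd (ZMod p) x.1 ∧
        ZMod.castHom hdvd (ZMod p) y.2 = t * ZMod.castHom hdvd (ZMod p) x.2)) :
    ¬ (enhancedPowerGraph (Multiplicative Z30)).Adj (ofAdd x) (ofAdd y) := by
  rw [adj_iff]
  rintro ⟨-, z, ⟨c, hc⟩, ⟨d, hd⟩⟩
  set φ := ZMod.castHom hdvd (ZMod p) with hφ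
  have hc1 : φ c * φ z.1 = φ x.1 := by rw [← map_mul]; exact congrArg (fun w => φ w.1) hc
  have hc2 : φ c * φ z.2 = φ x.2 := by rw [← map_mul]; exact congrArg (fun w => φ w.2) hc
  have hd1 : φ d * φ z.1 = φ y.1 := by rw [← map_mul]; exact congrArg (fun w => φ w.1) hd
  have hd2 : φ d * φ z.2 = φ y.2 := by rw [← map_mul]; exact congrArg (fun w => φ w.2) hd
  have hcne : φ c ≠ 0 := by
    rintro h0
    exact hx ⟨by rw [← hc1, h0, zero_mul], by rw [← hc2, h0, zero_mul]⟩
  refine h (φ d * (φ c)⁻¹) ⟨?_, ?_⟩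
  · rw [← hd1, ← hc1]; field_simp
  · rw [← hd2, ← hc2]; field_simp

/-- The five vertices of the pentagon: `a₁b₁, b₁c₂, a₂, b₂, a₁c₁` written additively. -/
def pent : Fin 5 → Z30 := ![(25,0),(10,6),(0,15),(0,10),(21,0)]

lemma edge01 : (enhancedPowerGraph (Multiplicative Z30)).Adj (ofAdd (pent 0)) (ofAdd (pent 1)) :=
  (adj_iff _ _).mpr ⟨by decide, (25,6), ⟨25, by decide⟩, ⟨16, by decide⟩⟩
lemma edge12 : (enhancedPowerGraph (Multiplicative Z30)).Adj (ofAdd (pent 1)) (ofAdd (pent 2)) :=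
  (adj_iff _ _).mpr ⟨by decide, (10,21), ⟨16, by decide⟩, ⟨15, by decide⟩⟩
lemma edge23 : (enhancedPowerGraph (Multiplicative Z30)).Adj (ofAdd (pent 2)) (ofAdd (pent 3)) :=
  (adj_iff _ _).mpr ⟨by decide, (0,5), ⟨3, by decide⟩, ⟨2, by decide⟩⟩
lemma edge34 : (enhancedPowerGraph (Multiplicative Z30)).Adj (ofAdd (pent 3)) (ofAdd (pent 4)) :=
  (adj_iff _ _).mpr ⟨by decide, (21,10), ⟨10, by decide⟩, ⟨21, by decide⟩⟩
lemma edge40 : (enhancedPowerGraph (Multiplicative Z30)).Adj (ofAdd (pent 4)) (ofAdd (pent 0)) :=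
  (adj_iff _ _).mpr ⟨by decide, (1,0), ⟨21, by decide⟩, ⟨25, by decide⟩⟩

instance : Fact (Nat.Prime 5) := ⟨by norm_num⟩

lemma non02 : ¬(enhancedPowerGraph (Multiplicative Z30)).Adj (ofAdd (pent 0)) (ofAdd (pent 2)) :=
  not_adj 2 (by norm_num) _ _ (by decide) (by decide)
lemma non03 : ¬(enhancedPowerGraph (Multiplicative Z30)).Adj (ofAdd (pent 0)) (ofAdd (pent 3)) :=
  not_adj 3 (by norm_num) _ _ (by decide) (by decide)
lemma non13 : ¬(enhancedPowerGraph (Multiplicative Z30)).Adj (ofAdd (pent 1)) (ofAdd (pent 3)) :=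
  not_adj 3 (by norm_num) _ _ (by decide) (by decide)
lemma non14 : ¬(enhancedPowerGraph (Multiplicative Z30)).Adj (ofAdd (pent 1)) (ofAdd (pent 4)) :=
  not_adj 5 (by norm_num) _ _ (by decide) (by decide)
lemma non24 : ¬(enhancedPowerGraph (Multiplicative Z30)).Adj (ofAdd (pent 2)) (ofAdd (pent 4)) :=
  not_adj 2 (by norm_num) _ _ (by decide) (by decide)

/-- The induced pentagon in the enhanced power graph. -/
def pentEmb : SimpleGraph.cycleGraph 5 ↪g enhancedPowerGraph (Multiplicative Z30) where
  toFun i := ofAdd (pent i)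
  inj' := by decide
  map_rel_iff' := by
    intro i j
    fin_cases i <;> fin_cases j <;>
      first
      | exact iff_of_true (by first
          | exact edge01 | exact edge12 | exact edge23 | exact edge34 | exact edge40
          | exact edge01.symm | exact edge12.symm | exact edge23.symm | exact edge34.symm
          | exact edge40.symm) (by decide)
      | exact iff_of_false (by first
          | exact fun h => h.1 rfl
          | exact non02 | exact non03 | exact non13 | exact non14 | exact non24
          | exact fun h => non02 h.symm | exact fun h => non03 h.symm
          | exact fun h => non13 h.symm | exact fun h => non14 h.symm
          | exact fun h => non24 h.symm) (by decide)

lemma cycle5_cliqueFree : (SimpleGraph.cycleGraph 5).CliqueFree 3 := by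
  simp only [SimpleGraph.CliqueFree, SimpleGraph.isNClique_iff]
  decide

/-- An odd closed walk in the pentagon. -/
def cycle5_loop : (SimpleGraph.cycleGraph 5).Walk 0 0 :=
  .cons (show (SimpleGraph.cycleGraph 5).Adj 0 1 by decide)
    (.cons (show (SimpleGraph.cycleGraph 5).Adj 1 2 by decide)
      (.cons (show (SimpleGraph.cycleGraph 5).Adj 2 3 by decide)
        (.cons (show (SimpleGraph.cycleGraph 5).Adj 3 4 by decide)
          (.cons (show (SimpleGraph.cycleGraph 5).Adj 4 0 by decide) .nil))))

/-- The enhanced power graph of `C₃₀ × C₃₀` contains an induced pentagon, and hence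
is not perfect. -/
theorem enhanced_C30xC30_not_perfect :
    Nonempty (SimpleGraph.cycleGraph 5 ↪g
        enhancedPowerGraph (Multiplicative (ZMod 30 × ZMod 30))) ∧
      ¬ (enhancedPowerGraph (Multiplicative (ZMod 30 × ZMod 30))).IsPerfect := by
  refine ⟨⟨pentEmb⟩, ?_⟩
  intro hperf
  set H := enhancedPowerGraph (Multiplicative Z30) with hH
  set s : Set (Multiplicative Z30) := Set.range pentEmb with hs
  let e : SimpleGraph.cycleGraph 5 ≃g H.induce s :=
    { toEquiv := Equiv.ofInjective pentEmb pentEmb.injective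
      map_rel_iff' := fun {a b} => pentEmb.map_rel_iff }
  -- lower bound on the chromatic number
  have h3 : 3 ≤ (SimpleGraph.cycleGraph 5).chromaticNumber :=
    SimpleGraph.Walk.three_le_chromaticNumber_of_odd_loop cycle5_loop (by decide)
  have h3' : 3 ≤ (H.induce s).chromaticNumber :=
    le_trans h3 (SimpleGraph.chromaticNumber_mono_of_hom e.toHom)
  -- upper bound on the clique number
  have hcf : (H.induce s).CliqueFree 3 := cycle5_cliqueFree.comap e.symm.toEmbedding.isContained
  haveI : Fintype ↥s := Fintype.ofFinite _
  have h2 : (H.induce s).cliqueNum ≤ 2 := by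
    by_contra hlt
    push_neg at hlt
    obtain ⟨t, ht⟩ := SimpleGraph.exists_isNClique_cliqueNum (G := H.induce s)
    exact (hcf.mono hlt) t ht
  have h2' : ((H.induce s).cliqueNum : ℕ∞) ≤ 2 := by exact_mod_cast h2
  have := hperf s
  rw [this] at h3'
  exact absurd (le_trans h3' h2') (by decide)
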